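/- arXiv:math/9911238 — 5 statements merged into one kernel-verified Lean document; each statement's English description precedes it below -/
import Mathlib

section
/- Let V : ℝ → ℂ satisfy ∫_ℝ |V(x)| e^{γx} dx < ∞ for every γ ∈ ℝ. Then every eigenvalue λ of H = −d²/dx² + V (including real eigenvalues) satisfies |λ| ≤ (9/4) ‖V‖₁², where ‖V‖₁ = ∫_ℝ |V(x)| dx. -/
open MeasureTheory Complex Real Set

set_option linter.unusedSectionVars false

open MeasureTheory Complex Real Set
open Filter Topology
open scoped RealInnerProductSpace

section helpers

variable {E : Type*} [NormedAddCommGroup E] [NormedSpace ℝ E] [CompleteSpace E]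

lemma splitIoi (φ : ℝ → E) (hφ : Integrable φ (volume : Measure ℝ)) {a t : ℝ} (h : a ≤ t) :
    ∫ y in Ioi a, φ y = (∫ y in a..t, φ y) + ∫ y in Ioi t, φ y := by
  rw [intervalIntegral.integral_of_le h, ← MeasureTheory.setIntegral_union
    (Set.Ioc_disjoint_Ioi le_rfl) measurableSet_Ioi hφ.integrableOn hφ.integrableOn,
    Set.Ioc_union_Ioi_eq_Ioi h]

lemma splitIic (φ : ℝ → E) (hφ : Integrable φ (volume : Measure ℝ)) {a t : ℝ} (h : a ≤ t) :
    ∫ y in Iic t, φ y = (∫ y in Iic a, φ y) + ∫ y in a..t, φ y := by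
  rw [intervalIntegral.integral_of_le h, ← MeasureTheory.setIntegral_union
    (Set.Iic_disjoint_Ioc le_rfl) measurableSet_Ioc hφ.integrableOn hφ.integrableOn,
    Set.Iic_union_Ioc_eq_Iic h]

lemma hasDerivAt_intIoi (φ : ℝ → E) (hc : Continuous φ) (hi : Integrable φ (volume : Measure ℝ))
    (x : ℝ) : HasDerivAt (fun t => ∫ y in Ioi t, φ y) (-φ x) x := by
  have heq : (fun t => ∫ y in Ioi t, φ y) =ᶠ[𝓝 x]
      (fun t => (∫ y in Ioi (x-1), φ y) - ∫ y in (x-1)..t, φ y) := by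
    filter_upwards [eventually_gt_nhds (show x - 1 < x by linarith)] with t ht
    rw [splitIoi φ hi (le_of_lt ht)]; abel
  rw [EventuallyEq.hasDerivAt_iff heq]
  exact (intervalIntegral.integral_hasDerivAt_right
    (hc.intervalIntegrable _ _) hc.aestronglyMeasurable.stronglyMeasurableAtFilter
    hc.continuousAt).const_sub _

lemma hasDerivAt_intIic (φ : ℝ → E) (hc : Continuous φ) (hi : Integrable φ (volume : Measure ℝ))
    (x : ℝ) : HasDerivAt (fun t => ∫ y in Iic t, φ y) (φ x) x := by
  have heq : (fun t => ∫ y in Iic t, φ y) =ᶠ[𝓝 x]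
      (fun t => (∫ y in Iic (x-1), φ y) + ∫ y in (x-1)..t, φ y) := by
    filter_upwards [eventually_gt_nhds (show x - 1 < x by linarith)] with t ht
    rw [splitIic φ hi (le_of_lt ht)]
  rw [EventuallyEq.hasDerivAt_iff heq]
  exact (intervalIntegral.integral_hasDerivAt_right
    (hc.intervalIntegrable _ _) hc.aestronglyMeasurable.stronglyMeasurableAtFilter
    hc.continuousAt).const_add _

lemma ode_exp (c : ℂ) (u : ℝ → ℂ) (hu : ∀ x, HasDerivAt u (c * u x) x) (x : ℝ) :
    u x = u 0 * Complex.exp (c * x) := by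
  have hd : ∀ s : ℝ, HasDerivAt (fun s : ℝ => u s * Complex.exp (-(c * s))) 0 s := by
    intro s
    have he : HasDerivAt (fun s : ℝ => Complex.exp (-(c * s)))
        (-Complex.exp (-(c * s)) * c) s := by
      have h0 : HasDerivAt (fun z : ℂ => Complex.exp (-(c * z)))
          (-Complex.exp (-(c * (s:ℂ))) * c) (s : ℂ) := by
        simpa using (((hasDerivAt_id (s:ℂ)).const_mul c).neg).cexp
      exact h0.comp_ofReal
    have := (hu s).fun_mul he
    convert! this using 1; ring
  have hdiff : Differentiable ℝ (fun s : ℝ => u s * Complex.exp (-(c * s))) :=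
    fun s => (hd s).differentiableAt
  have hconst := is_const_of_deriv_eq_zero hdiff (fun s => (hd s).deriv) x 0
  have hx : Complex.exp (-(c * x)) * Complex.exp (c * x) = 1 := by
    rw [← Complex.exp_add]; norm_num
  calc u x = (u x * Complex.exp (-(c * x))) * Complex.exp (c * x) := by
        rw [mul_assoc, hx, mul_one]
    _ = u 0 * Complex.exp (c * x) := by
        rw [hconst]; push_cast; norm_num


lemma decay_of_L2 (u : ℝ → ℂ) (hu : Differentiable ℝ u) (huc : Continuous u)
    (hu'c : Continuous (deriv u))
    (h2 : MemLp u 2 (volume : Measure ℝ)) (h2' : MemLp (deriv u) 2 (volume : Measure ℝ)) :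
    Tendsto u atTop (𝓝 0) ∧ Tendsto u atBot (𝓝 0) := by
  set ψ : ℝ → ℝ := fun x => ⟪u x, u x⟫ with hψdef
  set D : ℝ → ℝ := fun x => ⟪u x, deriv u x⟫ + ⟪deriv u x, u x⟫ with hDdef
  have hD : ∀ x, HasDerivAt ψ (D x) x := fun x =>
    HasDerivAt.inner ℝ ((hu x).hasDerivAt) ((hu x).hasDerivAt)
  have hDc : Continuous D := ((huc.inner hu'c).add (hu'c.inner huc))
  have hsq : Integrable (fun x => ‖u x‖ ^ 2 + ‖deriv u x‖ ^ 2) (volume : Measure ℝ) :=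
    (h2.norm.integrable_sq).add (h2'.norm.integrable_sq)
  have hDi : Integrable D (volume : Measure ℝ) := by
    refine hsq.mono' hDc.aestronglyMeasurable (ae_of_all _ fun x => ?_)
    have h1 := abs_real_inner_le_norm (u x) (deriv u x)
    have h2 := abs_real_inner_le_norm (deriv u x) (u x)
    have : |D x| ≤ 2 * (‖u x‖ * ‖deriv u x‖) := by
      calc |D x| ≤ |⟪u x, deriv u x⟫| + |⟪deriv u x, u x⟫| := abs_add_le _ _
        _ ≤ ‖u x‖ * ‖deriv u x‖ + ‖deriv u x‖ * ‖u x‖ := add_le_add h1 h2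
        _ = 2 * (‖u x‖ * ‖deriv u x‖) := by ring
    rw [Real.norm_eq_abs]
    nlinarith [sq_nonneg (‖u x‖ - ‖deriv u x‖), norm_nonneg (u x), norm_nonneg (deriv u x)]
  have hψi : Integrable ψ (volume : Measure ℝ) := by
    have := h2.norm.integrable_sq
    refine this.congr (ae_of_all _ fun x => ?_)
    rw [hψdef]; simp [real_inner_self_eq_norm_sq]
  have hψ0 : ∀ x, 0 ≤ ψ x := fun x => real_inner_self_nonneg
  have hFTC : ∀ x : ℝ, ψ x - ψ 0 = ∫ t in (0:ℝ)..x, D t := by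
    intro x
    rcases le_or_gt 0 x with h | h
    · exact (intervalIntegral.integral_eq_sub_of_hasDerivAt
        (fun t _ => hD t) (hDc.intervalIntegrable _ _)).symm
    · have h1 := intervalIntegral.integral_eq_sub_of_hasDerivAt
        (fun t (_ : t ∈ Set.uIcc x 0) => hD t) (hDc.intervalIntegrable x 0)
      have h2 : ∫ t in (0:ℝ)..x, D t = -∫ t in x..(0:ℝ), D t :=
        (intervalIntegral.integral_symm x 0)
      rw [h2, h1]; ring
  -- limits of ψ
  have hlimT : Tendsto ψ atTop (𝓝 (ψ 0 + ∫ t in Ioi (0:ℝ), D t)) := by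
    have h1 : Tendsto (fun x : ℝ => ∫ t in (0:ℝ)..x, D t) atTop (𝓝 (∫ t in Ioi (0:ℝ), D t)) :=
      intervalIntegral_tendsto_integral_Ioi 0 hDi.integrableOn tendsto_id
    have h2 := h1.const_add (ψ 0)
    refine h2.congr fun x => ?_
    rw [← hFTC x]; ring
  have hlimB : Tendsto ψ atBot (𝓝 (ψ 0 - ∫ t in Iic (0:ℝ), D t)) := by
    have h1 : Tendsto (fun x : ℝ => ∫ t in x..(0:ℝ), D t) atBot (𝓝 (∫ t in Iic (0:ℝ), D t)) :=
      intervalIntegral_tendsto_integral_Iic 0 hDi.integrableOn tendsto_id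
    have h2 := h1.const_sub (ψ 0)
    refine h2.congr fun x => ?_
    have h3 := hFTC x
    have h4 : ∫ t in (0:ℝ)..x, D t = -∫ t in x..(0:ℝ), D t :=
      (intervalIntegral.integral_symm x 0)
    rw [h4] at h3; linarith
  -- a nonneg integrable function tending to a limit has limit 0
  have key : ∀ L : ℝ, Tendsto ψ atTop (𝓝 L) → L = 0 := by
    intro L hL
    by_contra hL0
    have hLnn : 0 ≤ L := le_of_tendsto_of_tendsto' tendsto_const_nhds hL (fun x => hψ0 x)
    have hLpos : 0 < L := lt_of_le_of_ne hLnn (Ne.symm hL0)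
    have hev : ∀ᶠ x in atTop, L/2 < ψ x := hL.eventually_const_lt (by linarith)
    obtain ⟨X, hX⟩ := eventually_atTop.mp hev
    have hconst : IntegrableOn (fun _ : ℝ => L/2) (Ioi X) volume := by
      refine Integrable.mono' (hψi.integrableOn) aestronglyMeasurable_const ?_
      refine (ae_restrict_iff' measurableSet_Ioi).2 (ae_of_all _ fun x hx => ?_)
      rw [Real.norm_eq_abs, abs_of_pos (by linarith)]
      exact (hX x (le_of_lt hx)).le
    rw [integrableOn_const_iff] at hconst
    rcases hconst with h | h
    · simp at h; linarith
    · rw [Real.volume_Ioi] at h; exact (lt_irrefl _ h).elim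
  have keyB : ∀ L : ℝ, Tendsto ψ atBot (𝓝 L) → L = 0 := by
    intro L hL
    by_contra hL0
    have hLnn : 0 ≤ L := le_of_tendsto_of_tendsto' tendsto_const_nhds hL (fun x => hψ0 x)
    have hLpos : 0 < L := lt_of_le_of_ne hLnn (Ne.symm hL0)
    have hev : ∀ᶠ x in atBot, L/2 < ψ x := hL.eventually_const_lt (by linarith)
    obtain ⟨X, hX⟩ := eventually_atBot.mp hev
    have hconst : IntegrableOn (fun _ : ℝ => L/2) (Iio X) volume := by
      refine Integrable.mono' (hψi.integrableOn) aestronglyMeasurable_const ?_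
      refine (ae_restrict_iff' measurableSet_Iio).2 (ae_of_all _ fun x hx => ?_)
      rw [Real.norm_eq_abs, abs_of_pos (by linarith)]
      exact (hX x (le_of_lt hx)).le
    rw [integrableOn_const_iff] at hconst
    rcases hconst with h | h
    · simp at h; linarith
    · rw [Real.volume_Iio] at h; exact (lt_irrefl _ h).elim
  have hψT : Tendsto ψ atTop (𝓝 0) := by
    have := key _ hlimT; rwa [this] at hlimT
  have hψB : Tendsto ψ atBot (𝓝 0) := by
    have := keyB _ hlimB; rwa [this] at hlimB
  have hnorm : ∀ x, ‖u x‖ = Real.sqrt (ψ x) := by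
    intro x
    rw [hψdef]
    simp only [real_inner_self_eq_norm_sq]
    rw [Real.sqrt_sq (norm_nonneg _)]
  constructor
  · rw [tendsto_zero_iff_norm_tendsto_zero]
    have h1 : Tendsto (fun x => Real.sqrt (ψ x)) atTop (𝓝 (Real.sqrt 0)) :=
      (Real.continuous_sqrt.tendsto 0).comp hψT
    rw [Real.sqrt_zero] at h1
    exact h1.congr fun x => (hnorm x).symm
  · rw [tendsto_zero_iff_norm_tendsto_zero]
    have h1 : Tendsto (fun x => Real.sqrt (ψ x)) atBot (𝓝 (Real.sqrt 0)) :=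
      (Real.continuous_sqrt.tendsto 0).comp hψB
    rw [Real.sqrt_zero] at h1
    exact h1.congr fun x => (hnorm x).symm


lemma exists_max (u : ℝ → ℂ) (hc : Continuous u)
    (ht : Tendsto u atTop (𝓝 0)) (hb : Tendsto u atBot (𝓝 0)) :
    ∃ x₀, ∀ x, ‖u x‖ ≤ ‖u x₀‖ := by
  by_cases h : ∀ x, ‖u x‖ ≤ ‖u 0‖
  · exact ⟨0, h⟩
  push_neg at h; obtain ⟨z, hz⟩ := h
  have hz0 : 0 < ‖u z‖ := lt_of_le_of_lt (norm_nonneg _) hz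
  have htn : Tendsto (fun x => ‖u x‖) atTop (𝓝 0) := by simpa using ht.norm
  have hbn : Tendsto (fun x => ‖u x‖) atBot (𝓝 0) := by simpa using hb.norm
  obtain ⟨X, hX⟩ := eventually_atTop.mp (htn.eventually_lt_const hz0)
  obtain ⟨Y, hY⟩ := eventually_atBot.mp (hbn.eventually_lt_const hz0)
  set a := min Y z with ha
  set b := max X z with hb'
  have hab : a ≤ b := le_trans (min_le_right _ _) (le_max_right _ _)
  obtain ⟨x₀, hx₀mem, hx₀⟩ := (isCompact_Icc (a := a) (b := b)).exists_isMaxOn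
    (nonempty_Icc.mpr hab) (hc.norm.continuousOn)
  refine ⟨x₀, fun x => ?_⟩
  have hzmem : z ∈ Icc a b := ⟨min_le_right _ _, le_max_right _ _⟩
  by_cases hx : x ∈ Icc a b
  · exact hx₀ hx
  · have : ‖u x‖ ≤ ‖u z‖ := by
      rw [mem_Icc, not_and_or, not_le, not_le] at hx
      rcases hx with h | h
      · exact (hY x (by linarith [min_le_left Y z])).le
      · exact (hX x (by linarith [le_max_left X z])).le
    exact this.trans (hx₀ hzmem)

noncomputable def Bp (c : ℂ) (g : ℝ → ℂ) (x : ℝ) : ℂ :=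
  Complex.exp (c*x) * ∫ y in Ioi x, Complex.exp (-(c*y)) * g y

noncomputable def Bm (c : ℂ) (g : ℝ → ℂ) (x : ℝ) : ℂ :=
  Complex.exp (c*x) * ∫ y in Iic x, Complex.exp (-(c*y)) * g y

lemma contW (c : ℂ) (g : ℝ → ℂ) (hgc : Continuous g) :
    Continuous (fun y : ℝ => Complex.exp (-(c*y)) * g y) := by
  exact (Complex.continuous_exp.comp (by continuity)).mul hgc

lemma hasDerivAt_Bp (c : ℂ) (g : ℝ → ℂ) (hgc : Continuous g)
    (hi : Integrable (fun y : ℝ => Complex.exp (-(c*y)) * g y) (volume : Measure ℝ)) (x : ℝ) :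
    HasDerivAt (Bp c g) (c * Bp c g x - g x) x := by
  have h1 : HasDerivAt (fun t : ℝ => Complex.exp (c*t)) (c * Complex.exp (c*x)) x := by
    have h0 : HasDerivAt (fun z : ℂ => Complex.exp (c*z)) (c * Complex.exp (c*(x:ℂ))) (x:ℂ) := by
      simpa [mul_comm] using ((hasDerivAt_id (x:ℂ)).const_mul c).cexp
    exact h0.comp_ofReal
  have h2 := hasDerivAt_intIoi _ (contW c g hgc) hi x
  have h3 := h1.fun_mul h2
  have hexp : Complex.exp (c*(x:ℂ)) * Complex.exp (-(c*(x:ℂ))) = 1 := by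
    rw [← Complex.exp_add]; norm_num
  convert! h3 using 1
  simp only [Bp]
  linear_combination (g x) * hexp

lemma hasDerivAt_Bm (c : ℂ) (g : ℝ → ℂ) (hgc : Continuous g)
    (hi : Integrable (fun y : ℝ => Complex.exp (-(c*y)) * g y) (volume : Measure ℝ)) (x : ℝ) :
    HasDerivAt (Bm c g) (c * Bm c g x + g x) x := by
  have h1 : HasDerivAt (fun t : ℝ => Complex.exp (c*t)) (c * Complex.exp (c*x)) x := by
    have h0 : HasDerivAt (fun z : ℂ => Complex.exp (c*z)) (c * Complex.exp (c*(x:ℂ))) (x:ℂ) := by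
      simpa [mul_comm] using ((hasDerivAt_id (x:ℂ)).const_mul c).cexp
    exact h0.comp_ofReal
  have h2 := hasDerivAt_intIic _ (contW c g hgc) hi x
  have h3 := h1.fun_mul h2
  have hexp : Complex.exp (c*(x:ℂ)) * Complex.exp (-(c*(x:ℂ))) = 1 := by
    rw [← Complex.exp_add]; norm_num
  convert! h3 using 1
  simp only [Bm]
  linear_combination (-(g x)) * hexp

lemma norm_exp_mul_real (c : ℂ) (y : ℝ) : ‖Complex.exp (c*y)‖ = Real.exp (c.re * y) := by
  rw [Complex.norm_exp]
  congr 1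
  simp [Complex.mul_re]

lemma norm_Bp_le (c : ℂ) (g : ℝ → ℂ) (hc : 0 ≤ c.re)
    (hi : Integrable (fun y : ℝ => Complex.exp (-(c*y)) * g y) (volume : Measure ℝ))
    (hgi : Integrable g (volume : Measure ℝ)) (x : ℝ) :
    ‖Bp c g x‖ ≤ ∫ y in Ioi x, ‖g y‖ := by
  have key : ∀ y ∈ Ioi x, ‖Complex.exp (c*(x:ℝ))‖ * ‖Complex.exp (-(c*y)) * g y‖ ≤ ‖g y‖ := by
    intro y hy
    rw [norm_mul, norm_exp_mul_real, show -(c*(y:ℝ)) = (-c)*(y:ℝ) by ring, norm_exp_mul_real]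
    have : Real.exp (c.re * x) * Real.exp ((-c).re * y) = Real.exp (c.re * (x - y)) := by
      rw [← Real.exp_add]; congr 1; simp [Complex.neg_re]; ring
    rw [← mul_assoc, this]
    have hle : Real.exp (c.re * (x - y)) ≤ 1 := by
      rw [Real.exp_le_one_iff]
      have : y > x := hy
      nlinarith
    nlinarith [norm_nonneg (g y), Real.exp_pos (c.re * (x-y))]
  calc ‖Bp c g x‖ ≤ ‖Complex.exp (c*(x:ℝ))‖ * ‖∫ y in Ioi x, Complex.exp (-(c*y)) * g y‖ := by
        rw [Bp, norm_mul]
    _ ≤ ‖Complex.exp (c*(x:ℝ))‖ * ∫ y in Ioi x, ‖Complex.exp (-(c*y)) * g y‖ := by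
        gcongr
        exact norm_integral_le_integral_norm _
    _ = ∫ y in Ioi x, ‖Complex.exp (c*(x:ℝ))‖ * ‖Complex.exp (-(c*y)) * g y‖ := by
        rw [integral_const_mul]
    _ ≤ ∫ y in Ioi x, ‖g y‖ := by
        refine setIntegral_mono_on ((hi.norm.const_mul _).integrableOn)
          (hgi.norm.integrableOn) measurableSet_Ioi key

lemma norm_Bm_le (c : ℂ) (g : ℝ → ℂ) (hc : c.re ≤ 0)
    (hi : Integrable (fun y : ℝ => Complex.exp (-(c*y)) * g y) (volume : Measure ℝ))
    (hgi : Integrable g (volume : Measure ℝ)) (x : ℝ) :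
    ‖Bm c g x‖ ≤ ∫ y in Iic x, ‖g y‖ := by
  have key : ∀ y ∈ Iic x, ‖Complex.exp (c*(x:ℝ))‖ * ‖Complex.exp (-(c*y)) * g y‖ ≤ ‖g y‖ := by
    intro y hy
    rw [norm_mul, norm_exp_mul_real, show -(c*(y:ℝ)) = (-c)*(y:ℝ) by ring, norm_exp_mul_real]
    have : Real.exp (c.re * x) * Real.exp ((-c).re * y) = Real.exp (c.re * (x - y)) := by
      rw [← Real.exp_add]; congr 1; simp [Complex.neg_re]; ring
    rw [← mul_assoc, this]
    have hle : Real.exp (c.re * (x - y)) ≤ 1 := by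
      rw [Real.exp_le_one_iff]
      have : y ≤ x := hy
      nlinarith
    nlinarith [norm_nonneg (g y), Real.exp_pos (c.re * (x-y))]
  calc ‖Bm c g x‖ ≤ ‖Complex.exp (c*(x:ℝ))‖ * ‖∫ y in Iic x, Complex.exp (-(c*y)) * g y‖ := by
        rw [Bm, norm_mul]
    _ ≤ ‖Complex.exp (c*(x:ℝ))‖ * ∫ y in Iic x, ‖Complex.exp (-(c*y)) * g y‖ := by
        gcongr
        exact norm_integral_le_integral_norm _
    _ = ∫ y in Iic x, ‖Complex.exp (c*(x:ℝ))‖ * ‖Complex.exp (-(c*y)) * g y‖ := by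
        rw [integral_const_mul]
    _ ≤ ∫ y in Iic x, ‖g y‖ := by
        refine setIntegral_mono_on ((hi.norm.const_mul _).integrableOn)
          (hgi.norm.integrableOn) measurableSet_Iic key


lemma sqrt_gap {A bb K : ℝ} (hb : 0 ≤ bb) (hK : 0 < K) (h1 : K^2 = A)
    (h2 : 9/4*bb^2 < A) : 3*bb < 2*K := by nlinarith

lemma arith_contra {m kk bb : ℝ} (hm : 0 < m) (hbb : 0 ≤ bb) (hk : 3*bb < 2*kk)
    (hle : (2*kk)*m ≤ 2*(m*bb)) : False := by nlinarith


/-- `lam` is an eigenvalue of `H = -d²/dx² + V` acting in `L²(ℝ)`: there is a nonzero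
twice continuously differentiable function `f` with `f`, `f′`, `f″` all in `L²`
satisfying `-f″ + V f = lam f` everywhere. -/
def IsEigenvalue1D (V : ℝ → ℂ) (lam : ℂ) : Prop :=
  ∃ f : ℝ → ℂ, f ≠ 0 ∧ ContDiff ℝ 2 f ∧
    MemLp f 2 (volume : Measure ℝ) ∧
    MemLp (deriv f) 2 (volume : Measure ℝ) ∧
    MemLp (deriv (deriv f)) 2 (volume : Measure ℝ) ∧
    ∀ x, -(deriv (deriv f) x) + V x * f x = lam * f x

set_option maxHeartbeats 2000000 in
theorem eigenvalue_bound_exponential_decay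
    (V : ℝ → ℂ)
    (hV : ∀ γ : ℝ, Integrable (fun x => ‖V x‖ * Real.exp (γ * x)))
    (lam : ℂ) (hlam : IsEigenvalue1D V lam) :
    ‖lam‖ ≤ 9 / 4 * (∫ x, ‖V x‖) ^ 2 := by
  obtain ⟨f, hf0, hf2, hL2f, hL2f', hL2f'', heqn⟩ := hlam
  by_contra hcon
  push_neg at hcon
  set b : ℝ := ∫ x, ‖V x‖ with hbdef
  have hV0 : Integrable (fun x : ℝ => ‖V x‖) (volume : Measure ℝ) := by
    simpa using hV 0
  have hb0 : 0 ≤ b := integral_nonneg (fun x => norm_nonneg _)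
  have habs : 0 < ‖lam‖ := lt_of_le_of_lt (by positivity) hcon
  -- smoothness bookkeeping
  have hf2' : ContDiff ℝ ((1:WithTop ℕ∞) + 1) f := by
    have : ((1:WithTop ℕ∞) + 1) = 2 := by norm_num
    rwa [this]
  have hdf : Differentiable ℝ f := hf2.differentiable (by norm_num)
  have hstep := (contDiff_succ_iff_deriv.mp hf2')
  have hf'1 : ContDiff ℝ (1:WithTop ℕ∞) (deriv f) := hstep.2.2
  have hdf' : Differentiable ℝ (deriv f) := hf'1.differentiable (by norm_num)
  have hfc : Continuous f := hf2.continuous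
  have hf'c : Continuous (deriv f) := hf'1.continuous
  have hf''c : Continuous (deriv (deriv f)) := (contDiff_one_iff_deriv.mp hf'1).2
  -- decay of f and deriv f
  obtain ⟨hfT, hfB⟩ := decay_of_L2 f hdf hfc hf'c hL2f hL2f'
  obtain ⟨hf'T, hf'B⟩ := decay_of_L2 (deriv f) hdf' hf'c hf''c hL2f' hL2f''
  -- max of f
  obtain ⟨x₀, hx₀⟩ := exists_max f hfc hfT hfB
  set M : ℝ := ‖f x₀‖ with hMdef
  have hM0 : 0 < M := by
    obtain ⟨z, hz⟩ := Function.ne_iff.mp hf0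
    exact lt_of_lt_of_le (norm_pos_iff.mpr hz) (hx₀ z)
  -- max of deriv f
  obtain ⟨x₁, hx₁⟩ := exists_max (deriv f) hf'c hf'T hf'B
  set M' : ℝ := ‖deriv f x₁‖ with hM'def
  -- the function g = V f
  set g : ℝ → ℂ := fun x => V x * f x with hgdef
  have hgeq : ∀ x, g x = deriv (deriv f) x + lam * f x := by
    intro x; have := heqn x; simp only [hgdef]; linear_combination this
  have hgc : Continuous g := by
    have : g = fun x => deriv (deriv f) x + lam * f x := funext hgeq
    rw [this]
    exact hf''c.add (continuous_const.mul hfc)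
  have hgnorm : ∀ y, ‖g y‖ = ‖V y‖ * ‖f y‖ := by
    intro y; simp only [hgdef]; rw [norm_mul]
  have hgle : ∀ y, ‖g y‖ ≤ M * ‖V y‖ := by
    intro y
    rw [hgnorm]
    calc ‖V y‖ * ‖f y‖ ≤ ‖V y‖ * M :=
          mul_le_mul_of_nonneg_left (hx₀ y) (norm_nonneg _)
      _ = M * ‖V y‖ := mul_comm _ _
  have hWint : ∀ c : ℂ, Integrable (fun y : ℝ => Complex.exp (-(c*y)) * g y) (volume : Measure ℝ) := by
    intro c
    refine ((hV (-c.re)).const_mul M).mono'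
      ((Complex.continuous_exp.comp (by continuity)).mul hgc).aestronglyMeasurable
      (ae_of_all _ fun y => ?_)
    rw [norm_mul, Complex.norm_exp]
    have hre : (-(c*(y:ℂ))).re = -c.re * y := by simp [Complex.mul_re]
    rw [hre]
    calc Real.exp (-c.re*y) * ‖g y‖ ≤ Real.exp (-c.re*y) * (M * ‖V y‖) :=
          mul_le_mul_of_nonneg_left (hgle y) (Real.exp_pos _).le
      _ = M * (‖V y‖ * Real.exp (-c.re * y)) := by ring
  have hgint : Integrable g (volume : Measure ℝ) := by
    have := hWint 0
    simpa using this
  have hgl1 : ∫ y, ‖g y‖ ≤ M * b := by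
    calc ∫ y, ‖g y‖ ≤ ∫ y, M * ‖V y‖ :=
          integral_mono hgint.norm (hV0.const_mul M) hgle
      _ = M * b := by rw [integral_const_mul]
  have htail_le : ∀ x, (∫ y in Ioi x, ‖g y‖) ≤ M * b := fun x =>
    le_trans (setIntegral_le_integral hgint.norm (ae_of_all _ fun y => norm_nonneg _)) hgl1
  -- second derivative identity
  have hfd2 : ∀ (k : ℂ), k^2 = lam → ∀ x, HasDerivAt (deriv f) (-(k^2) * f x + g x) x := by
    intro k hk x
    have h1 : HasDerivAt (deriv f) (deriv (deriv f) x) x := (hdf' x).hasDerivAt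
    have h2 : deriv (deriv f) x = -(k^2) * f x + g x := by
      rw [hgeq x, hk]; ring
    rwa [h2] at h1
  -- tail integral tends to zero at +infinity
  have htail0 : Tendsto (fun x => ∫ y in Ioi x, ‖g y‖) atTop (𝓝 0) := by
    have h1 : Tendsto (fun x : ℝ => ∫ t in (0:ℝ)..x, ‖g t‖) atTop
        (𝓝 (∫ t in Ioi (0:ℝ), ‖g t‖)) :=
      intervalIntegral_tendsto_integral_Ioi 0 hgint.norm.integrableOn tendsto_id
    have h2 := (tendsto_const_nhds (x := ∫ t in Ioi (0:ℝ), ‖g t‖) (f := atTop)).sub h1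
    rw [sub_self] at h2
    refine h2.congr' ?_
    filter_upwards [eventually_ge_atTop (0:ℝ)] with x hx
    have := splitIoi (fun y => ‖g y‖) hgint.norm hx
    linarith
  by_cases hreal : lam.im = 0 ∧ 0 ≤ lam.re
  · -- Case 1 : lam is real and nonnegative
    obtain ⟨him, hre0⟩ := hreal
    have hre : 0 < lam.re := by
      rcases eq_or_lt_of_le hre0 with h | h
      · exfalso
        have hlz : lam = 0 := Complex.ext (by simp [← h]) (by simp [him])
        rw [hlz] at habs; simp at habs
      · exact h
    set k : ℝ := Real.sqrt lam.re with hkdef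
    have hk0 : 0 < k := Real.sqrt_pos.mpr hre
    have hk2 : ((k:ℂ))^2 = lam := by
      apply Complex.ext
      · simp only [pow_two, Complex.mul_re, Complex.ofReal_re, Complex.ofReal_im]
        simpa using Real.mul_self_sqrt hre0
      · simp [pow_two, Complex.mul_im, him]
    have hkabs : k^2 = ‖lam‖ := by
      rw [← hk2, norm_pow, Complex.norm_real, Real.norm_eq_abs, abs_of_pos hk0]
    have hkb : 3*b < 2*k := sqrt_gap hb0 hk0 hkabs hcon
    have W1 := hWint (Complex.I*(k:ℂ))
    have W2 := hWint (-(Complex.I*(k:ℂ)))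
    have hc1re : (Complex.I*(k:ℂ)).re = 0 := by simp
    have hc2re : (-(Complex.I*(k:ℂ))).re = 0 := by simp
    set P : ℝ → ℂ := Bp (-(Complex.I*(k:ℂ))) g with hPdef
    set Q : ℝ → ℂ := Bp (Complex.I*(k:ℂ)) g with hQdef
    have hP : ∀ x, HasDerivAt P (-(Complex.I*(k:ℂ)) * P x - g x) x :=
      fun x => hasDerivAt_Bp _ g hgc W2 x
    have hQ : ∀ x, HasDerivAt Q ((Complex.I*(k:ℂ)) * Q x - g x) x :=
      fun x => hasDerivAt_Bp _ g hgc W1 x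
    -- h = 2ik f - (P - Q),  h' = 2ik f' + ik (P + Q)
    have hI2 : (Complex.I*(k:ℂ))^2 = -((k:ℂ)^2) := by
      rw [mul_pow, Complex.I_sq]; ring
    set h1 : ℝ → ℂ := fun x => 2*Complex.I*(k:ℂ) * f x - (P x - Q x) with hh1def
    set h2 : ℝ → ℂ := fun x => 2*Complex.I*(k:ℂ) * deriv f x + Complex.I*(k:ℂ)*(P x + Q x)
      with hh2def
    have hd1 : ∀ x, HasDerivAt h1 (h2 x) x := by
      intro x
      have := (((hdf x).hasDerivAt).const_mul (2*Complex.I*(k:ℂ))).fun_sub ((hP x).fun_sub (hQ x))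
      convert! this using 1
      simp only [hh2def]; ring
    have hd2 : ∀ x, HasDerivAt h2 (-((k:ℂ)^2) * h1 x) x := by
      intro x
      have := ((hfd2 (k:ℂ) hk2 x).const_mul (2*Complex.I*(k:ℂ))).fun_add
        (((hP x).fun_add (hQ x)).const_mul (Complex.I*(k:ℂ)))
      convert! this using 1
      simp only [hh1def]
      linear_combination (P x - Q x) * hI2
    set u : ℝ → ℂ := fun x => h2 x - Complex.I*(k:ℂ) * h1 x with hudef
    have hu : ∀ x, HasDerivAt u (-(Complex.I*(k:ℂ)) * u x) x := by
      intro x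
      have := (hd2 x).fun_sub ((hd1 x).const_mul (Complex.I*(k:ℂ)))
      convert! this using 1
      simp only [hudef]
      linear_combination (h1 x) * hI2
    have hurep := ode_exp (-(Complex.I*(k:ℂ))) u hu
    -- everything tends to 0 at +infinity
    have hPT : Tendsto P atTop (𝓝 0) :=
      squeeze_zero_norm (fun x => norm_Bp_le _ g (by rw [hc2re]) W2 hgint x) htail0
    have hQT : Tendsto Q atTop (𝓝 0) :=
      squeeze_zero_norm (fun x => norm_Bp_le _ g (by rw [hc1re]) W1 hgint x) htail0
    have hh1T : Tendsto h1 atTop (𝓝 0) := by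
      have := ((hfT.const_mul (2*Complex.I*(k:ℂ))).sub (hPT.sub hQT))
      simpa [hh1def] using this
    have hh2T : Tendsto h2 atTop (𝓝 0) := by
      have := ((hf'T.const_mul (2*Complex.I*(k:ℂ))).add ((hPT.add hQT).const_mul
        (Complex.I*(k:ℂ))))
      simpa [hh2def] using this
    have huT : Tendsto u atTop (𝓝 0) := by
      have := hh2T.sub (hh1T.const_mul (Complex.I*(k:ℂ)))
      simpa [hudef] using this
    have hexp1 : ∀ (c : ℂ), c.re = 0 → ∀ x : ℝ, ‖Complex.exp (c * x)‖ = 1 := by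
      intro c hc x
      rw [Complex.norm_exp]
      have : (c * (x:ℂ)).re = 0 := by simp [Complex.mul_re, hc]
      rw [this, Real.exp_zero]
    have hu0 : u 0 = 0 := by
      have hnormu : ∀ x, ‖u x‖ = ‖u 0‖ := by
        intro x
        rw [hurep x, norm_mul, hexp1 _ (by simp) x, mul_one]
      have ht1 : Tendsto (fun _ : ℝ => ‖u 0‖) atTop (𝓝 0) := by
        have ht2 : Tendsto (fun x => ‖u x‖) atTop (𝓝 0) := by simpa using huT.norm
        exact ht2.congr hnormu
      exact norm_eq_zero.mp (tendsto_nhds_unique tendsto_const_nhds ht1)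
    have hh : ∀ x, HasDerivAt h1 ((Complex.I*(k:ℂ)) * h1 x) x := by
      intro x
      have hux : u x = 0 := by rw [hurep x, hu0, zero_mul]
      have h3 : h2 x = Complex.I*(k:ℂ) * h1 x := by
        simp only [hudef] at hux
        exact sub_eq_zero.mp hux
      have := hd1 x
      rwa [h3] at this
    have hhrep := ode_exp (Complex.I*(k:ℂ)) h1 hh
    have hh10 : h1 0 = 0 := by
      have hnormh : ∀ x, ‖h1 x‖ = ‖h1 0‖ := by
        intro x
        rw [hhrep x, norm_mul, hexp1 _ (by simp) x, mul_one]
      have ht1 : Tendsto (fun _ : ℝ => ‖h1 0‖) atTop (𝓝 0) := by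
        have ht2 : Tendsto (fun x => ‖h1 x‖) atTop (𝓝 0) := by simpa using hh1T.norm
        exact ht2.congr hnormh
      exact norm_eq_zero.mp (tendsto_nhds_unique tendsto_const_nhds ht1)
    have hfF : ∀ x, 2*Complex.I*(k:ℂ) * f x = P x - Q x := by
      intro x
      have hx := hhrep x
      rw [hh10, zero_mul] at hx
      have h5 : h1 x = 0 := hx
      simp only [hh1def] at h5
      exact sub_eq_zero.mp h5
    -- final contradiction
    have habs2k : ‖2*Complex.I*(k:ℂ)‖ = 2*k := by
      rw [norm_mul, norm_mul, Complex.norm_two, Complex.norm_I, Complex.norm_real,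
        Real.norm_eq_abs, abs_of_pos hk0]; ring
    have hMle : (2*k) * M ≤ 2*(M*b) := by
      have e1 : (2*k) * M = ‖2*Complex.I*(k:ℂ) * f x₀‖ := by
        rw [norm_mul, habs2k, hMdef]
      have e2 : ‖P x₀ - Q x₀‖ ≤ 2*(M*b) := by
        have h3 : ‖P x₀‖ ≤ M*b :=
          le_trans (norm_Bp_le _ g (by rw [hc2re]) W2 hgint x₀) (htail_le x₀)
        have h4 : ‖Q x₀‖ ≤ M*b :=
          le_trans (norm_Bp_le _ g (by rw [hc1re]) W1 hgint x₀) (htail_le x₀)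
        calc ‖P x₀ - Q x₀‖ ≤ ‖P x₀‖ + ‖Q x₀‖ := norm_sub_le _ _
          _ ≤ 2*(M*b) := by linarith
      rw [e1, hfF x₀]
      exact e2
    exact arith_contra hM0 hb0 hkb hMle
  · -- Case 2 : lam is not in [0,∞)
    have hgap : 0 < ‖lam‖ - lam.re := by
      rcases not_and_or.mp hreal with h | h
      · have h1 := Complex.abs_re_lt_norm.mpr h
        have h2 := le_abs_self lam.re
        linarith
      · push_neg at h
        have := norm_nonneg lam
        linarith
    set q : ℝ := Real.sqrt ((‖lam‖ - lam.re)/2) with hqdef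
    have hq0 : 0 < q := Real.sqrt_pos.mpr (by linarith)
    have hq2 : q^2 = (‖lam‖ - lam.re)/2 := Real.sq_sqrt (by linarith)
    set p : ℝ := lam.im / (2*q) with hpdef
    set k : ℂ := (p:ℂ) + (q:ℂ)*Complex.I with hkdef
    have hkre : k.re = p := by simp [hkdef]
    have hkim : k.im = q := by simp [hkdef]
    have him2 : lam.im^2 = ‖lam‖^2 - lam.re^2 := by
      have h1 := Complex.sq_norm lam
      rw [Complex.normSq_apply] at h1
      linear_combination -h1
    have hk2 : k^2 = lam := by
      apply Complex.ext
      · have e1 : (k^2).re = p*p - q*q := by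
          simp [pow_two, Complex.mul_re, hkre, hkim]
        rw [e1]
        have h4 : (0:ℝ) < 4*q^2 := by positivity
        have hp2 : p * (2*q) = lam.im := by rw [hpdef]; field_simp
        have key : (p*p - q*q - lam.re) * (4*q^2) = 0 := by
          linear_combination (p*2*q + lam.im) * hp2 + him2
            + (-4*q^2 - 2*‖lam‖ - 2*lam.re) * hq2
        rcases mul_eq_zero.mp key with h | h
        · linarith
        · exact absurd h (ne_of_gt h4)
      · have e1 : (k^2).im = p*q + q*p := by
          simp [pow_two, Complex.mul_im, hkre, hkim]
        rw [e1]
        have hp2 : p * (2*q) = lam.im := by rw [hpdef]; field_simp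
        linear_combination hp2
    have habsk2 : ‖k‖ ^ 2 = ‖lam‖ := by
      rw [← hk2, norm_pow]
    have habskpos : 0 < ‖k‖ := by
      have h1 : |k.im| ≤ ‖k‖ := Complex.abs_im_le_norm k
      rw [hkim, abs_of_pos hq0] at h1
      linarith
    have hkb : 3*b < 2*‖k‖ := sqrt_gap hb0 habskpos habsk2 hcon
    have hI2 : (Complex.I*k)^2 = -(k^2) := by
      rw [mul_pow, Complex.I_sq]; ring
    have W1 := hWint (Complex.I*k)
    have W2 := hWint (-(Complex.I*k))
    have hc1re : (Complex.I*k).re ≤ 0 := by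
      simp [Complex.mul_re, hkim]
      linarith
    have hc2re : 0 ≤ (-(Complex.I*k)).re := by
      simp [Complex.mul_re, hkim]
      linarith
    set P : ℝ → ℂ := Bm (Complex.I*k) g with hPdef
    set Q : ℝ → ℂ := Bp (-(Complex.I*k)) g with hQdef
    have hP : ∀ x, HasDerivAt P ((Complex.I*k) * P x + g x) x :=
      fun x => hasDerivAt_Bm _ g hgc W1 x
    have hQ : ∀ x, HasDerivAt Q (-(Complex.I*k) * Q x - g x) x :=
      fun x => hasDerivAt_Bp _ g hgc W2 x
    set h1 : ℝ → ℂ := fun x => 2*Complex.I*k * f x - (P x + Q x) with hh1def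
    set h2 : ℝ → ℂ := fun x => 2*Complex.I*k * deriv f x - Complex.I*k*(P x - Q x) with hh2def
    have hd1 : ∀ x, HasDerivAt h1 (h2 x) x := by
      intro x
      have := (((hdf x).hasDerivAt).const_mul (2*Complex.I*k)).fun_sub ((hP x).fun_add (hQ x))
      convert! this using 1
      simp only [hh2def]; ring
    have hd2 : ∀ x, HasDerivAt h2 (-(k^2) * h1 x) x := by
      intro x
      have := ((hfd2 k hk2 x).const_mul (2*Complex.I*k)).fun_sub
        (((hP x).fun_sub (hQ x)).const_mul (Complex.I*k))
      convert! this using 1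
      simp only [hh1def]
      linear_combination (P x + Q x) * hI2
    set u : ℝ → ℂ := fun x => h2 x - Complex.I*k * h1 x with hudef
    have hu : ∀ x, HasDerivAt u (-(Complex.I*k) * u x) x := by
      intro x
      have := (hd2 x).fun_sub ((hd1 x).const_mul (Complex.I*k))
      convert! this using 1
      simp only [hudef]
      linear_combination (h1 x) * hI2
    have hurep := ode_exp (-(Complex.I*k)) u hu
    -- bounds
    have habs2k : ‖2*Complex.I*k‖ = 2*‖k‖ := by
      rw [norm_mul, norm_mul, Complex.norm_two, Complex.norm_I]; ring
    have habsIk : ‖Complex.I*k‖ = ‖k‖ := by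
      rw [norm_mul, Complex.norm_I, one_mul]
    have hIic_le : ∀ x, (∫ y in Iic x, ‖g y‖) ≤ M * b := fun x =>
      le_trans (setIntegral_le_integral hgint.norm (ae_of_all _ fun y => norm_nonneg _)) hgl1
    have normP : ∀ x, ‖P x‖ ≤ M*b := fun x =>
      le_trans (norm_Bm_le _ g hc1re W1 hgint x) (hIic_le x)
    have normQ : ∀ x, ‖Q x‖ ≤ M*b := fun x =>
      le_trans (norm_Bp_le _ g hc2re W2 hgint x) (htail_le x)
    have hMnn : ∀ x, ‖f x‖ ≤ M := hx₀
    have hM'nn : ∀ x, ‖deriv f x‖ ≤ M' := hx₁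
    set C1 : ℝ := 2*‖k‖*M + 2*(M*b) with hC1def
    have hbound_h1 : ∀ x, ‖h1 x‖ ≤ C1 := by
      intro x
      simp only [hh1def]
      calc ‖2*Complex.I*k * f x - (P x + Q x)‖
          ≤ ‖2*Complex.I*k * f x‖ + ‖P x + Q x‖ := norm_sub_le _ _
        _ ≤ ‖2*Complex.I*k * f x‖ + (‖P x‖ + ‖Q x‖) := by
            gcongr; exact norm_add_le _ _
        _ ≤ 2*‖k‖*M + (M*b + M*b) := by
            gcongr
            · rw [norm_mul, habs2k]
              gcongr
              exact hMnn x
            · exact normP x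
            · exact normQ x
        _ = C1 := by rw [hC1def]; ring
    set C : ℝ := (2*‖k‖*M' + ‖k‖*(2*(M*b))) + ‖k‖ * C1
      with hCdef
    have hbound_u : ∀ x, ‖u x‖ ≤ C := by
      intro x
      simp only [hudef]
      calc ‖h2 x - Complex.I*k * h1 x‖ ≤ ‖h2 x‖ + ‖Complex.I*k * h1 x‖ := norm_sub_le _ _
        _ ≤ (2*‖k‖*M' + ‖k‖*(2*(M*b))) + ‖k‖ * C1 := by
            gcongr ?_ + ?_
            · simp only [hh2def]
              calc ‖2*Complex.I*k * deriv f x - Complex.I*k*(P x - Q x)‖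
                  ≤ ‖2*Complex.I*k * deriv f x‖ + ‖Complex.I*k*(P x - Q x)‖ :=
                    norm_sub_le _ _
                _ ≤ 2*‖k‖*M' + ‖k‖*(2*(M*b)) := by
                    gcongr ?_ + ?_
                    · rw [norm_mul, habs2k]
                      gcongr
                      exact hM'nn x
                    · rw [norm_mul, habsIk]
                      gcongr
                      calc ‖P x - Q x‖ ≤ ‖P x‖ + ‖Q x‖ := norm_sub_le _ _
                          _ ≤ 2*(M*b) := by have := normP x; have := normQ x; linarith
            · rw [norm_mul, habsIk]
              gcongr
              exact hbound_h1 x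
        _ = C := by rw [hCdef]
    have hexpm : ∀ x : ℝ, ‖Complex.exp (-(Complex.I*k) * x)‖ = Real.exp (q * x) := by
      intro x
      rw [Complex.norm_exp]
      congr 1
      simp [Complex.mul_re, hkim]
    have hexpp : ∀ x : ℝ, ‖Complex.exp ((Complex.I*k) * x)‖ = Real.exp (-(q * x)) := by
      intro x
      rw [Complex.norm_exp]
      congr 1
      simp [Complex.mul_re, hkim]
    have hu0 : u 0 = 0 := by
      by_contra hne
      have hpos : 0 < ‖u 0‖ := norm_pos_iff.mpr hne
      have hT : Tendsto (fun x : ℝ => ‖u 0‖ * Real.exp (q * x)) atTop atTop := by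
        have h1t : Tendsto (fun x : ℝ => q * x) atTop atTop :=
          Tendsto.const_mul_atTop hq0 tendsto_id
        exact Tendsto.const_mul_atTop hpos (Real.tendsto_exp_atTop.comp h1t)
      obtain ⟨x, hx⟩ := (hT.eventually_gt_atTop C).exists
      have : ‖u x‖ = ‖u 0‖ * Real.exp (q * x) := by
        rw [hurep x, norm_mul, hexpm x]
      linarith [hbound_u x, hx, this.le, this.ge]
    have hh : ∀ x, HasDerivAt h1 ((Complex.I*k) * h1 x) x := by
      intro x
      have hux : u x = 0 := by rw [hurep x, hu0, zero_mul]
      simp only [hudef] at hux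
      have h3 : h2 x = Complex.I*k * h1 x := sub_eq_zero.mp hux
      have := hd1 x
      rwa [h3] at this
    have hhrep := ode_exp (Complex.I*k) h1 hh
    have hh10 : h1 0 = 0 := by
      by_contra hne
      have hpos : 0 < ‖h1 0‖ := norm_pos_iff.mpr hne
      have hT : Tendsto (fun x : ℝ => ‖h1 0‖ * Real.exp (-(q * x))) atBot atTop := by
        have h1t : Tendsto (fun x : ℝ => -(q * x)) atBot atTop := by
          have h2t : Tendsto (fun x : ℝ => -x) atBot atTop := tendsto_neg_atBot_atTop
          have h3t := Tendsto.const_mul_atTop hq0 h2t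
          refine h3t.congr fun x => ?_
          ring
        exact Tendsto.const_mul_atTop hpos (Real.tendsto_exp_atTop.comp h1t)
      obtain ⟨x, hx⟩ := (hT.eventually_gt_atTop C1).exists
      have : ‖h1 x‖ = ‖h1 0‖ * Real.exp (-(q * x)) := by
        rw [hhrep x, norm_mul, hexpp x]
      linarith [hbound_h1 x, hx, this.le]
    have hfF : ∀ x, 2*Complex.I*k * f x = P x + Q x := by
      intro x
      have hx := hhrep x
      rw [hh10, zero_mul] at hx
      have h5 : h1 x = 0 := hx
      simp only [hh1def] at h5
      exact sub_eq_zero.mp h5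
    have hMle : (2*‖k‖) * M ≤ 2*(M*b) := by
      have e1 : (2*‖k‖) * M = ‖2*Complex.I*k * f x₀‖ := by
        rw [norm_mul, habs2k, hMdef]
      rw [e1, hfF x₀]
      calc ‖P x₀ + Q x₀‖ ≤ ‖P x₀‖ + ‖Q x₀‖ := norm_add_le _ _
        _ ≤ 2*(M*b) := by have := normP x₀; have := normQ x₀; linarith
    exact arith_contra hM0 hb0 hkb hMle
end helpers
end

section
/- Let 0 < α ≤ π and let a : [0,α] → ℝ be differentiable with a(θ) = a₁θ + a₂θ² + O(θ³) and a′(θ) = a₁ + 2a₂θ + O(θ²) as θ → 0⁺, where a₂ > 0. Define the parametric envelope curve x(θ) = a(θ) sin(θ) + a′(θ) cos(θ), y(θ) = a(θ) cos(θ) − a′(θ) sin(θ). Then as θ → 0⁺ one has x(θ) − a₁ = 2a₂θ + O(θ²) (so x(θ) − a₁ is small and positive for small θ > 0) and y(θ) = −(x(θ) − a₁)² / (4a₂) + o((x(θ) − a₁)²). -/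
open Real Filter Asymptotics Topology

theorem envelope_asymptotics
    (α a₁ a₂ : ℝ) (hα₀ : 0 < α) (hα₁ : α ≤ π) (ha₂ : 0 < a₂)
    (a : ℝ → ℝ)
    (hdiff : ∀ θ ∈ Set.Icc (0 : ℝ) α, DifferentiableAt ℝ a θ)
    (ha : (fun θ => a θ - (a₁ * θ + a₂ * θ ^ 2)) =O[nhdsWithin 0 (Set.Ioi 0)]
      fun θ => θ ^ 3)
    (ha' : (fun θ => deriv a θ - (a₁ + 2 * a₂ * θ)) =O[nhdsWithin 0 (Set.Ioi 0)]
      fun θ => θ ^ 2)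
    (x y : ℝ → ℝ)
    (hx : ∀ θ, x θ = a θ * Real.sin θ + deriv a θ * Real.cos θ)
    (hy : ∀ θ, y θ = a θ * Real.cos θ - deriv a θ * Real.sin θ) :
    ((fun θ => x θ - a₁ - 2 * a₂ * θ) =O[nhdsWithin 0 (Set.Ioi 0)] fun θ => θ ^ 2) ∧
    (∀ᶠ θ in nhdsWithin 0 (Set.Ioi 0), 0 < x θ - a₁) ∧
    ((fun θ => y θ + (x θ - a₁) ^ 2 / (4 * a₂)) =o[nhdsWithin 0 (Set.Ioi 0)]
      fun θ => (x θ - a₁) ^ 2) := by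
  set l : Filter ℝ := nhdsWithin 0 (Set.Ioi 0) with hl
  have hmem : ∀ᶠ θ in l, θ ∈ Set.Ioo (0:ℝ) 1 :=
    Ioo_mem_nhdsGT_of_mem ⟨le_refl 0, one_pos⟩
  -- power comparisons
  have hpow : ∀ m n : ℕ, n ≤ m → (fun θ : ℝ => θ ^ m) =O[l] fun θ => θ ^ n := by
    intro m n hnm
    apply IsBigO.of_bound 1
    filter_upwards [hmem] with θ ⟨h0, h1⟩
    simp only [Real.norm_eq_abs]
    rw [one_mul, abs_of_pos (pow_pos h0 m), abs_of_pos (pow_pos h0 n)]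
    exact pow_le_pow_of_le_one h0.le h1.le hnm
  have hpow1 : ∀ m : ℕ, 1 ≤ m → (fun θ : ℝ => θ ^ m) =O[l] fun θ => θ := by
    intro m hm
    exact (hpow m 1 hm).congr (fun _ => rfl) (fun θ => pow_one θ)
  -- trig asymptotics
  have hs : (fun θ => Real.sin θ - θ) =O[l] fun θ => θ ^ 3 := by
    apply IsBigO.of_bound 1
    filter_upwards [hmem] with θ ⟨h0, h1⟩
    have hlt := Real.sin_lt h0
    have hgt := Real.sin_gt_sub_cube h0
    simp only [Real.norm_eq_abs]
    rw [one_mul, abs_of_pos (pow_pos h0 3), abs_of_neg (show Real.sin θ - θ < 0 by linarith)]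
    nlinarith [pow_pos h0 3]
  have hc : (fun θ => Real.cos θ - 1) =O[l] fun θ => θ ^ 2 := by
    apply IsBigO.of_bound 1
    filter_upwards [hmem] with θ ⟨h0, h1⟩
    have h2 := Real.one_sub_sq_div_two_le_cos (x := θ)
    have h3 := Real.cos_le_one θ
    simp only [Real.norm_eq_abs]
    rw [one_mul, abs_of_pos (pow_pos h0 2), abs_le]
    constructor <;> nlinarith [pow_pos h0 2]
  have hsinO : (fun θ => Real.sin θ) =O[l] fun θ => θ := by
    apply IsBigO.of_bound 1
    filter_upwards with θ
    simpa using Real.abs_sin_le_abs (x := θ)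
  have hcosO : (fun θ => Real.cos θ) =O[l] fun _ => (1:ℝ) := by
    apply IsBigO.of_bound 1
    filter_upwards with θ
    simpa using Real.abs_cos_le_one θ
  have htend : Tendsto (fun θ : ℝ => θ) l (𝓝 0) :=
    tendsto_id.mono_left nhdsWithin_le_nhds
  have hlit1 : (fun θ : ℝ => θ) =o[l] fun _ => (1:ℝ) := by
    rw [isLittleO_one_iff]; exact htend
  -- polynomial bounds
  have hpO : (fun θ => a₁ * θ + a₂ * θ ^ 2) =O[l] fun θ => θ := by
    have h1 : (fun θ : ℝ => a₁ * θ) =O[l] fun θ => θ :=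
      (isBigO_refl (fun θ : ℝ => θ) l).const_mul_left a₁
    have h2 : (fun θ : ℝ => a₂ * θ ^ 2) =O[l] fun θ => θ :=
      ((isBigO_refl (fun θ : ℝ => θ ^ 2) l).const_mul_left a₂).trans
        (hpow1 2 one_le_two)
    exact h1.add h2
  have hqO : (fun θ => a₁ + 2 * a₂ * θ) =O[l] fun _ => (1:ℝ) := by
    have h1 : (fun _ : ℝ => a₁) =O[l] fun _ => (1:ℝ) := isBigO_const_const a₁ one_ne_zero l
    have h2 : (fun θ : ℝ => 2 * a₂ * θ) =O[l] fun _ => (1:ℝ) :=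
      (hlit1.isBigO.const_mul_left (2 * a₂))
    exact h1.add h2
  have haO : (fun θ => a θ) =O[l] fun θ => θ := by
    have := (ha.trans (hpow1 3 (by norm_num))).add hpO
    simpa using this
  -- Part 1
  have key1 : (fun θ => x θ - a₁ - 2 * a₂ * θ) =O[l] fun θ => θ ^ 2 := by
    have heq : (fun θ => x θ - a₁ - 2 * a₂ * θ) = fun θ =>
        a θ * Real.sin θ + (deriv a θ - (a₁ + 2 * a₂ * θ)) * Real.cos θ
          + (a₁ + 2 * a₂ * θ) * (Real.cos θ - 1) := by
      funext θ; rw [hx θ]; ring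
    rw [heq]
    have t1 : (fun θ => a θ * Real.sin θ) =O[l] fun θ => θ ^ 2 :=
      (haO.mul hsinO).congr (fun _ => rfl) (fun θ => (sq θ).symm)
    have t2 : (fun θ => (deriv a θ - (a₁ + 2 * a₂ * θ)) * Real.cos θ) =O[l]
        fun θ => θ ^ 2 :=
      (ha'.mul hcosO).congr (fun _ => rfl) (fun θ => by ring)
    have t3 : (fun θ => (a₁ + 2 * a₂ * θ) * (Real.cos θ - 1)) =O[l] fun θ => θ ^ 2 :=
      (hqO.mul hc).congr (fun _ => rfl) (fun θ => by ring)
    exact (t1.add t2).add t3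
  -- lower bound on x θ - a₁
  obtain ⟨C, hC⟩ := key1.bound
  have hCsmall : ∀ᶠ θ in l, C * θ < a₂ := by
    have : Tendsto (fun θ : ℝ => C * θ) l (𝓝 (C * 0)) := htend.const_mul C
    rw [mul_zero] at this
    exact this.eventually_lt_const ha₂
  have hlow : ∀ᶠ θ in l, a₂ * θ < x θ - a₁ := by
    filter_upwards [hC, hCsmall, hmem] with θ h1 h2 ⟨h0, _⟩
    simp only [Real.norm_eq_abs] at h1
    rw [abs_of_pos (pow_pos h0 2), abs_le] at h1
    nlinarith [h1.1, mul_lt_mul_of_pos_right h2 h0]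
  have key2 : ∀ᶠ θ in l, 0 < x θ - a₁ := by
    filter_upwards [hlow, hmem] with θ h1 ⟨h0, _⟩
    nlinarith [mul_pos ha₂ h0]
  -- Part 3
  have huO : (fun θ => x θ - a₁) =O[l] fun θ => θ := by
    have := key1.trans (hpow1 2 one_le_two) |>.add
      ((isBigO_refl (fun θ : ℝ => θ) l).const_mul_left (2 * a₂))
    simpa using this
  have hsumO : (fun θ => x θ - a₁ + 2 * a₂ * θ) =O[l] fun θ => θ :=
    huO.add ((isBigO_refl (fun θ : ℝ => θ) l).const_mul_left (2 * a₂))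
  have hsq : (fun θ => (x θ - a₁) ^ 2 - 4 * a₂ ^ 2 * θ ^ 2) =O[l] fun θ => θ ^ 3 := by
    have := key1.mul hsumO
    exact this.congr (fun θ => by ring) (fun θ => by ring)
  have hy3 : (fun θ => y θ + a₂ * θ ^ 2) =O[l] fun θ => θ ^ 3 := by
    have heq : (fun θ => y θ + a₂ * θ ^ 2) = fun θ =>
        (a θ - (a₁ * θ + a₂ * θ ^ 2)) * Real.cos θ
          - (deriv a θ - (a₁ + 2 * a₂ * θ)) * Real.sin θ
          + (a₁ * θ + a₂ * θ ^ 2) * (Real.cos θ - 1)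
          - (a₁ + 2 * a₂ * θ) * (Real.sin θ - θ) := by
      funext θ; rw [hy θ]; ring
    rw [heq]
    have t1 : (fun θ => (a θ - (a₁ * θ + a₂ * θ ^ 2)) * Real.cos θ) =O[l]
        fun θ => θ ^ 3 := (ha.mul hcosO).congr (fun _ => rfl) (fun θ => by ring)
    have t2 : (fun θ => (deriv a θ - (a₁ + 2 * a₂ * θ)) * Real.sin θ) =O[l]
        fun θ => θ ^ 3 := (ha'.mul hsinO).congr (fun _ => rfl) (fun θ => by ring)
    have t3 : (fun θ => (a₁ * θ + a₂ * θ ^ 2) * (Real.cos θ - 1)) =O[l]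
        fun θ => θ ^ 3 := (hpO.mul hc).congr (fun _ => rfl) (fun θ => by ring)
    have t4 : (fun θ => (a₁ + 2 * a₂ * θ) * (Real.sin θ - θ)) =O[l]
        fun θ => θ ^ 3 := (hqO.mul hs).congr (fun _ => rfl) (fun θ => by ring)
    exact ((t1.sub t2).add t3).sub t4
  have htot : (fun θ => y θ + (x θ - a₁) ^ 2 / (4 * a₂)) =O[l] fun θ => θ ^ 3 := by
    have h1 := hy3.add (hsq.const_mul_left (1 / (4 * a₂)))
    refine h1.congr (fun θ => ?_) (fun _ => rfl)
    field_simp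
    ring
  have hlit : (fun θ : ℝ => θ ^ 3) =o[l] fun θ => θ ^ 2 := by
    have := (isBigO_refl (fun θ : ℝ => θ ^ 2) l).mul_isLittleO hlit1
    exact this.congr (fun θ => by ring) (fun θ => by ring)
  have hθ2u : (fun θ : ℝ => θ ^ 2) =O[l] fun θ => (x θ - a₁) ^ 2 := by
    apply IsBigO.of_bound ((1 / a₂) ^ 2)
    filter_upwards [hlow, hmem] with θ h1 ⟨h0, _⟩
    have hu : 0 < x θ - a₁ := by nlinarith [mul_pos ha₂ h0]
    have h2 : (a₂ * θ) ^ 2 ≤ (x θ - a₁) ^ 2 := by nlinarith [mul_pos ha₂ h0]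
    simp only [Real.norm_eq_abs]
    rw [abs_of_pos (pow_pos h0 2), abs_of_pos (pow_pos hu 2)]
    calc θ ^ 2 = (1 / a₂) ^ 2 * (a₂ * θ) ^ 2 := by field_simp
      _ ≤ (1 / a₂) ^ 2 * (x θ - a₁) ^ 2 :=
        mul_le_mul_of_nonneg_left h2 (by positivity)
  exact ⟨key1, key2, (htot.trans_isLittleO hlit).trans_isBigO hθ2u⟩
end

section
/- Let V ∈ L¹(ℝ) ∩ L²(ℝ) be complex-valued, let z ∈ ℂ with Re(z) > 0, and suppose g ∈ L²(ℝ), g ≠ 0, satisfies g(x) = −∫_ℝ |V(x)|^{1/2} · (e^{−z|x−y|}/(2z)) · sgn(V(y)) |V(y)|^{1/2} g(y) dy for almost every x ∈ ℝ, where sgn(V(y)) = V(y)/|V(y)| if V(y) ≠ 0 and sgn(V(y)) = 0 otherwise. Then |z| ≤ ‖V‖₁ / 2, where ‖V‖₁ = ∫_ℝ |V(x)| dx. -/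
open MeasureTheory Complex Real Set

/-- The phase (complex sign) of `w`: `w/|w|` if `w ≠ 0`, and `0` otherwise. -/
noncomputable def csgn (w : ℂ) : ℂ := if w = 0 then 0 else w / (‖w‖ : ℂ)

lemma csgn_norm_le (w : ℂ) : ‖csgn w‖ ≤ 1 := by
  unfold csgn
  split
  · simp
  · rename_i h
    rw [norm_div, Complex.norm_real, norm_norm, div_self (norm_ne_zero_iff.mpr h)]

theorem birman_schwinger_bound
    (V : ℝ → ℂ) (hV1 : Integrable V) (hV2 : MemLp V 2 (volume : Measure ℝ))
    (z : ℂ) (hz : 0 < z.re)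
    (g : ℝ → ℂ) (hgL2 : MemLp g 2 (volume : Measure ℝ)) (hg0 : ¬(g =ᵐ[volume] 0))
    (heq : ∀ᵐ x ∂(volume : Measure ℝ), g x =
      -∫ y, (Real.sqrt ‖V x‖ : ℂ) *
        (Complex.exp (-z * |x - y|) / (2 * z)) *
        csgn (V y) * (Real.sqrt ‖V y‖ : ℂ) * g y) :
    ‖z‖ ≤ (∫ x, ‖V x‖) / 2 := by
  set W : ℝ → ℝ := fun x => Real.sqrt ‖V x‖ with hWdef
  have hVabs : Integrable (fun x => ‖V x‖) (volume : Measure ℝ) := by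
    exact hV1.norm
  have hWm : AEStronglyMeasurable W (volume : Measure ℝ) :=
    (Real.continuous_sqrt.comp continuous_norm).comp_aestronglyMeasurable
      hV1.aestronglyMeasurable
  have hW2 : MemLp W 2 (volume : Measure ℝ) := by
    rw [memLp_two_iff_integrable_sq hWm]
    have h : (fun x => W x ^ 2) = fun x => ‖V x‖ := by
      funext x
      exact Real.sq_sqrt (norm_nonneg _)
    rw [h]
    exact hVabs
  have hgabs : MemLp (fun x => ‖g x‖) 2 (volume : Measure ℝ) := by
    exact hgL2.norm
  have hprod : Integrable (fun y => W y * ‖g y‖) (volume : Measure ℝ) := by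
    apply Integrable.mono' (hW2.integrable_sq.add hgabs.integrable_sq)
      (hWm.mul hgabs.aestronglyMeasurable)
    filter_upwards with y
    simp only [Pi.mul_apply, Pi.add_apply]
    have h1 : 0 ≤ W y := Real.sqrt_nonneg _
    have h2 : 0 ≤ ‖g y‖ := norm_nonneg _
    rw [Real.norm_eq_abs, _root_.abs_of_nonneg (mul_nonneg h1 h2)]
    nlinarith [sq_nonneg (W y - ‖g y‖)]
  set C := ∫ y, W y * ‖g y‖ with hCdef
  have hC0 : 0 ≤ C :=
    integral_nonneg fun y => mul_nonneg (Real.sqrt_nonneg _) (norm_nonneg _)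
  have hzne : z ≠ 0 := fun h => by simp [h] at hz
  set r := ‖z‖ with hrdef
  have hr : 0 < r := norm_pos_iff.mpr hzne
  have key : ∀ᵐ x ∂(volume : Measure ℝ), ‖g x‖ ≤ W x * C / (2 * r) := by
    filter_upwards [heq] with x hx
    have step1 : ‖g x‖ ≤ ∫ y, ‖(W x : ℂ) *
        (Complex.exp (-z * |x - y|) / (2 * z)) * csgn (V y) * (W y : ℂ) * g y‖ := by
      rw [hx, norm_neg]
      exact norm_integral_le_integral_norm _
    have step2 : (∫ y, ‖(W x : ℂ) * (Complex.exp (-z * |x - y|) / (2 * z)) *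
        csgn (V y) * (W y : ℂ) * g y‖)
        ≤ ∫ y, (W x / (2 * r)) * (W y * ‖g y‖) := by
      apply integral_mono_of_nonneg
      · filter_upwards with y; positivity
      · exact hprod.const_mul _
      · filter_upwards with y
        have hWx : 0 ≤ W x := Real.sqrt_nonneg _
        have hWy : 0 ≤ W y := Real.sqrt_nonneg _
        have e1 : ‖(W x : ℂ)‖ = W x := by
          rw [Complex.norm_real, Real.norm_of_nonneg hWx]
        have e4 : ‖(W y : ℂ)‖ = W y := by
          rw [Complex.norm_real, Real.norm_of_nonneg hWy]
        have e2 : ‖Complex.exp (-z * |x - y|) / (2 * z)‖ ≤ 1 / (2 * r) := by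
          rw [norm_div, Complex.norm_exp,
            norm_mul, Complex.norm_two]
          gcongr
          have hre : (-z * ((|x - y| : ℝ) : ℂ)).re = -(z.re * |x - y|) := by
            simp [Complex.mul_re]
          rw [hre, Real.exp_le_one_iff]
          exact neg_nonpos.mpr (mul_nonneg hz.le (abs_nonneg _))
        have e3 : ‖csgn (V y)‖ ≤ 1 := csgn_norm_le _
        calc ‖(W x : ℂ) * (Complex.exp (-z * |x - y|) / (2 * z)) *
              csgn (V y) * (W y : ℂ) * g y‖
            = ‖(W x : ℂ)‖ * ‖Complex.exp (-z * |x - y|) / (2 * z)‖ *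
              ‖csgn (V y)‖ * ‖(W y : ℂ)‖ * ‖g y‖ := by
              rw [norm_mul, norm_mul, norm_mul, norm_mul]
          _ ≤ W x * (1 / (2 * r)) * 1 * W y * ‖g y‖ := by
              rw [e1, e4]; gcongr
          _ = W x / (2 * r) * (W y * ‖g y‖) := by
              ring
    have step3 : (∫ y, (W x / (2 * r)) * (W y * ‖g y‖))
        = W x * C / (2 * r) := by
      rw [integral_const_mul, ← hCdef]; ring
    exact step1.trans (step2.trans_eq step3)
  rcases hC0.eq_or_lt with h0 | hpos
  · exfalso
    apply hg0
    filter_upwards [key] with x hx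
    have hle : ‖g x‖ ≤ 0 := by
      rw [← h0] at hx
      simpa using hx
    have : ‖g x‖ = 0 := le_antisymm hle (norm_nonneg _)
    simpa using this
  · have key2 : ∀ᵐ x ∂(volume : Measure ℝ),
        W x * ‖g x‖ ≤ ‖V x‖ * (C / (2 * r)) := by
      filter_upwards [key] with x hx
      calc W x * ‖g x‖ ≤ W x * (W x * C / (2 * r)) :=
            mul_le_mul_of_nonneg_left hx (Real.sqrt_nonneg _)
        _ = W x ^ 2 * (C / (2 * r)) := by ring
        _ = ‖V x‖ * (C / (2 * r)) := by
            rw [hWdef, Real.sq_sqrt (norm_nonneg _)]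
    have main : C ≤ (∫ x, ‖V x‖) * (C / (2 * r)) := by
      calc C ≤ ∫ x, ‖V x‖ * (C / (2 * r)) := by
            rw [hCdef]
            exact integral_mono_of_nonneg
              (Filter.Eventually.of_forall fun y =>
                mul_nonneg (Real.sqrt_nonneg _) (norm_nonneg _))
              (hVabs.mul_const _) key2
        _ = (∫ x, ‖V x‖) * (C / (2 * r)) := integral_mul_const _ _
    set I := ∫ x, ‖V x‖ with hIdef
    have h2r : (0 : ℝ) < 2 * r := by positivity
    have main' : C * (2 * r) ≤ I * C := by
      rw [← le_div_iff₀ h2r, mul_div_assoc] at *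
      exact main
    have : 2 * r ≤ I := by nlinarith
    linarith
end

section
/- Let V ∈ L¹(ℝ) be complex-valued, and let z ∈ ℂ with Re(z) ≥ 0 and |z| > (3/2) ‖V‖₁, where ‖V‖₁ = ∫_ℝ |V(x)| dx. Suppose f̃ : ℝ → ℂ is a bounded continuous function satisfying f̃(x) = 1 + (1/(2z)) ∫_{−∞}^{x} (1 − e^{−2z(x−t)}) V(t) f̃(t) dt for all x ∈ ℝ, and define φ(z) = 2z + ∫_ℝ V(t) f̃(t) dt. Then φ(z) ≠ 0. -/
open MeasureTheory Complex Real Set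

theorem phi_nonvanishing_for_large_z
    (V : ℝ → ℂ) (hV1 : Integrable V)
    (z : ℂ) (hzre : 0 ≤ z.re)
    (hz : (3 / 2) * (∫ x, ‖V x‖) < ‖z‖)
    (ftil : ℝ → ℂ) (hcont : Continuous ftil)
    (hbdd : ∃ M : ℝ, ∀ x, ‖ftil x‖ ≤ M)
    (heq : ∀ x : ℝ, ftil x = 1 + (1 / (2 * z)) *
      ∫ t in Set.Iic x, (1 - Complex.exp (-2 * z * (x - t))) * V t * ftil t)
    (φ : ℂ) (hφ : φ = 2 * z + ∫ t, V t * ftil t) :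
    φ ≠ 0 := by
  set I : ℝ := ∫ x, ‖V x‖ with hIdef
  have hI0 : 0 ≤ I := integral_nonneg (fun x => (norm_nonneg _))
  have hz0 : 0 < ‖z‖ := lt_of_le_of_lt (by positivity) hz
  have hzne : z ≠ 0 := by
    intro h; rw [h] at hz0; simp at hz0
  -- integrability of V * ftil
  obtain ⟨M, hM⟩ := hbdd
  have hVf : Integrable (fun t => V t * ftil t) := by
    have := hV1.bdd_mul (f := ftil) hcont.aestronglyMeasurable
      (c := M) (Filter.Eventually.of_forall fun x => by simpa using hM x)
    simpa [mul_comm] using this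
  -- supremum of |ftil|
  set S : ℝ := sSup (Set.range fun x => ‖ftil x‖) with hSdef
  have hbdda : BddAbove (Set.range fun x => ‖ftil x‖) :=
    ⟨M, by rintro y ⟨x, rfl⟩; exact hM x⟩
  have hSle : ∀ x, ‖ftil x‖ ≤ S := fun x =>
    le_csSup hbdda ⟨x, rfl⟩
  have hS0 : 0 ≤ S := le_trans (norm_nonneg _) (hSle 0)
  -- the key pointwise bound
  have key : ∀ x : ℝ, ‖ftil x‖ ≤ 1 + S * I / ‖z‖ := by
    intro x
    -- the integrand
    set G : ℝ → ℂ := fun t => (1 - Complex.exp (-2 * z * (x - t))) * V t * ftil t with hGdef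
    have hexp_bd : ∀ t : ℝ, t ≤ x → ‖(1 : ℂ) - Complex.exp (-2 * z * (x - t))‖ ≤ 2 := by
      intro t ht
      have hre : (-2 * z * ((x : ℂ) - t)).re = -2 * z.re * (x - t) := by
        have : ((x : ℂ) - t) = ((x - t : ℝ) : ℂ) := by push_cast; ring
        rw [this]
        simp [Complex.mul_re, Complex.mul_im]
      calc ‖(1 : ℂ) - Complex.exp (-2 * z * (x - t))‖
          ≤ ‖(1 : ℂ)‖ + ‖Complex.exp (-2 * z * (x - t))‖ := norm_sub_le _ _
        _ ≤ 1 + 1 := by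
            refine add_le_add norm_one.le ?_
            rw [Complex.norm_exp, hre]
            exact Real.exp_le_one_iff.mpr (by nlinarith)
        _ = 2 := by norm_num
    have hbound_ae : ∀ᵐ t ∂(volume.restrict (Set.Iic x)),
        ‖G t‖ ≤ 2 * S * ‖V t‖ := by
      rw [ae_restrict_iff' measurableSet_Iic]
      filter_upwards with t ht
      have : ‖G t‖ = ‖(1 : ℂ) - Complex.exp (-2 * z * (x - t))‖ * ‖V t‖ * ‖ftil t‖ := by
        simp [hGdef, norm_mul]
      rw [this]
      have h1 := hexp_bd t ht
      have h2 : ‖ftil t‖ ≤ S := by simpa using hSle t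
      have hVn : ‖V t‖ = ‖V t‖ := rfl
      calc ‖(1 : ℂ) - Complex.exp (-2 * z * (x - t))‖ * ‖V t‖ * ‖ftil t‖
          ≤ 2 * ‖V t‖ * S :=
            mul_le_mul (mul_le_mul_of_nonneg_right h1 (norm_nonneg _)) h2
              (norm_nonneg _) (by positivity)
        _ = 2 * S * ‖V t‖ := by rw [hVn]; ring
    have hmaj : Integrable (fun t => 2 * S * ‖V t‖) := by
      simpa [mul_assoc] using hV1.norm.const_mul (2 * S)
    have hGint : IntegrableOn G (Set.Iic x) := by
      refine Integrable.mono' hmaj.restrict ?_ hbound_ae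
      have hc : Continuous fun t : ℝ => (1 : ℂ) - Complex.exp (-2 * z * (x - t)) :=
        continuous_const.sub (Complex.continuous_exp.comp
          (continuous_const.mul (continuous_const.sub Complex.continuous_ofReal)))
      exact ((hc.aestronglyMeasurable.mul hV1.aestronglyMeasurable).mul
        hcont.aestronglyMeasurable).restrict
    have hint_bd : ‖∫ t in Set.Iic x, G t‖ ≤ 2 * S * I := by
      calc ‖∫ t in Set.Iic x, G t‖ ≤ ∫ t in Set.Iic x, ‖G t‖ :=
            norm_integral_le_integral_norm _
        _ ≤ ∫ t in Set.Iic x, 2 * S * ‖V t‖ :=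
            integral_mono_ae hGint.norm hmaj.restrict hbound_ae
        _ ≤ ∫ t, 2 * S * ‖V t‖ := by
            refine setIntegral_le_integral hmaj ?_
            filter_upwards with t
            positivity
        _ = 2 * S * I := by rw [integral_const_mul]
    have := heq x
    calc ‖ftil x‖
        = ‖1 + (1 / (2 * z)) * ∫ t in Set.Iic x, G t‖ := by rw [this]
      _ ≤ ‖(1 : ℂ)‖ + ‖(1 / (2 * z)) * ∫ t in Set.Iic x, G t‖ :=
          norm_add_le _ _
      _ = 1 + (1 / (2 * ‖z‖)) * ‖∫ t in Set.Iic x, G t‖ := by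
          rw [norm_mul]
          simp [norm_div]
      _ ≤ 1 + (1 / (2 * ‖z‖)) * (2 * S * I) := by
          refine add_le_add le_rfl (mul_le_mul_of_nonneg_left ?_ (by positivity))
          simpa using hint_bd
      _ = 1 + S * I / ‖z‖ := by field_simp
  -- S bound
  have hSbd : S ≤ 1 + S * I / ‖z‖ := by
    refine csSup_le ⟨‖ftil 0‖, ⟨0, rfl⟩⟩ ?_
    rintro y ⟨x, rfl⟩
    exact key x
  have hSbd' : S * ‖z‖ ≤ ‖z‖ + S * I := by
    have := mul_le_mul_of_nonneg_right hSbd (le_of_lt hz0)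
    calc S * ‖z‖ ≤ (1 + S * I / ‖z‖) * ‖z‖ := this
      _ = ‖z‖ + S * I := by field_simp
  -- now suppose φ = 0
  intro hφ0
  have h2z : (2 : ℂ) * z = -∫ t, V t * ftil t := by
    rw [hφ0] at hφ
    linear_combination -hφ
  have habs : 2 * ‖z‖ ≤ S * I := by
    have h1 : ‖2 * z‖ = 2 * ‖z‖ := by
      rw [norm_mul]; simp
    have h2 : ‖∫ t, V t * ftil t‖ ≤ ∫ t, ‖V t‖ * S := by
      calc ‖∫ t, V t * ftil t‖ ≤ ∫ t, ‖V t * ftil t‖ := norm_integral_le_integral_norm _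
        _ ≤ ∫ t, ‖V t‖ * S := by
            refine integral_mono hVf.norm (hV1.norm.mul_const S) ?_
            intro t
            simp only [norm_mul]
            exact mul_le_mul_of_nonneg_left (hSle t) (norm_nonneg _)
    have h3 : (∫ t, ‖V t‖ * S) = I * S := by
      rw [integral_mul_const]
    rw [h3] at h2
    calc 2 * ‖z‖ = ‖2 * z‖ := h1.symm
      _ = ‖-∫ t, V t * ftil t‖ := by rw [h2z]
      _ = ‖∫ t, V t * ftil t‖ := norm_neg _
      _ ≤ I * S := h2
      _ = S * I := mul_comm _ _
  -- contradiction
  set a := ‖z‖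
  have hIz : I ≤ a := by nlinarith
  nlinarith [mul_le_mul_of_nonneg_right habs (sub_nonneg.mpr hIz),
    mul_le_mul_of_nonneg_left hSbd' hI0]
end

section
/- Fix an integer N ≥ 1 and 0 < α ≤ π, and let S = { z ∈ ℂ : z ≠ 0, 0 ≤ 2 arg(z) ≤ α }. Let u : S × ℝ^N → ℂ be bounded, such that for each x ∈ ℝ^N the map z ↦ u(z,x) is continuous on S and analytic in the interior of S, and such that u(rz, x) = u(z, rx) for all r > 0, z ∈ S, x ∈ ℝ^N. Define c(θ) := sup_{x∈ℝ^N} |u(e^{iθ/2}, x)| for θ ∈ [0,α], and assume c(θ) > 0 for all θ. Then θ ↦ log c(θ) is a convex function on [0,α]. -/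
open MeasureTheory Complex Real Set

theorem log_convexity_of_sup_norm
    (N : ℕ) (hN : 1 ≤ N) (α : ℝ) (hα₀ : 0 < α) (hα₁ : α ≤ π)
    (S : Set ℂ) (hS : S = {z : ℂ | z ≠ 0 ∧ 0 ≤ 2 * z.arg ∧ 2 * z.arg ≤ α})
    (u : ℂ → EuclideanSpace ℝ (Fin N) → ℂ)
    (hu_bdd : ∃ M : ℝ, ∀ z ∈ S, ∀ x, ‖u z x‖ ≤ M)
    (hu_cont : ∀ x, ContinuousOn (fun z => u z x) S)
    (hu_an : ∀ x, DifferentiableOn ℂ (fun z => u z x) (interior S))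
    (hu_scale : ∀ r : ℝ, 0 < r → ∀ z ∈ S, ∀ x : EuclideanSpace ℝ (Fin N),
      u ((r : ℂ) * z) x = u z (r • x))
    (c : ℝ → ℝ) (hc : ∀ θ, c θ = ⨆ x : EuclideanSpace ℝ (Fin N),
      ‖u (Complex.exp (Complex.I * θ / 2)) x‖)
    (hcpos : ∀ θ ∈ Icc (0 : ℝ) α, 0 < c θ) :
    ConvexOn ℝ (Icc (0 : ℝ) α) (fun θ => Real.log (c θ)) := by
  obtain ⟨M, hM⟩ := hu_bdd
  -- basic decomposition of the exponential
  have hdecomp : ∀ θ s : ℝ, Complex.exp (Complex.I * (↑θ + ↑s * Complex.I) / 2)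
      = ((Real.exp (-s / 2) : ℝ) : ℂ) * Complex.exp (Complex.I * ↑θ / 2) := by
    intro θ s
    rw [Complex.ofReal_exp, ← Complex.exp_add]
    congr 1
    push_cast
    ring_nf
    simp [Complex.I_sq]
    ring
  -- the argument of exp(Iθ/2)
  have harg : ∀ θ : ℝ, 0 ≤ θ → θ ≤ α →
      (Complex.exp (Complex.I * ↑θ / 2)).arg = θ / 2 := by
    intro θ h0 h1
    have h : Complex.I * ↑θ / 2 = ((θ / 2 : ℝ) : ℂ) * Complex.I := by
      push_cast; ring
    rw [h, Complex.arg_exp_mul_I]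
    rw [toIocMod_eq_self]
    constructor
    · nlinarith [Real.pi_pos]
    · nlinarith [Real.pi_pos]
  have hπ := Real.pi_pos
  -- membership of exp(Iθ/2) in S
  have hz_mem : ∀ θ ∈ Icc (0 : ℝ) α, Complex.exp (Complex.I * ↑θ / 2) ∈ S := by
    intro θ hθ
    rw [hS]
    refine ⟨Complex.exp_ne_zero _, ?_, ?_⟩ <;>
      rw [harg θ hθ.1 hθ.2] <;> [linarith [hθ.1]; linarith [hθ.2]]
  -- boundedness of the sup
  have hbdd_range : ∀ θ ∈ Icc (0 : ℝ) α,
      BddAbove (range fun x : EuclideanSpace ℝ (Fin N) =>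
        ‖u (Complex.exp (Complex.I * ↑θ / 2)) x‖) := by
    intro θ hθ
    exact ⟨M, forall_mem_range.2 fun x => hM _ (hz_mem θ hθ) x⟩
  have hbound : ∀ θ ∈ Icc (0 : ℝ) α, ∀ x,
      ‖u (Complex.exp (Complex.I * ↑θ / 2)) x‖ ≤ c θ := by
    intro θ hθ x
    rw [hc θ]
    exact le_ciSup (hbdd_range θ hθ) x
  -- bound on each vertical line
  have hfle : ∀ θ ∈ Icc (0 : ℝ) α, ∀ (s : ℝ) x,
      ‖u (Complex.exp (Complex.I * (↑θ + ↑s * Complex.I) / 2)) x‖ ≤ c θ := by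
    intro θ hθ s x
    rw [hdecomp θ s, hu_scale _ (Real.exp_pos _) _ (hz_mem θ hθ) x]
    exact hbound θ hθ _
  -- membership of all these points in S
  have hmemS : ∀ θ ∈ Icc (0 : ℝ) α, ∀ s : ℝ,
      Complex.exp (Complex.I * (↑θ + ↑s * Complex.I) / 2) ∈ S := by
    intro θ hθ s
    rw [hdecomp θ s, hS]
    constructor
    · exact mul_ne_zero (by exact_mod_cast (Real.exp_pos _).ne') (Complex.exp_ne_zero _)
    · rw [Complex.arg_real_mul _ (Real.exp_pos _), harg θ hθ.1 hθ.2]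
      constructor <;> linarith [hθ.1, hθ.2]
  -- the open subsector inside the interior of S
  set T : Set ℂ := {z : ℂ | z.arg ∈ Ioo 0 (α / 2)} with hT
  have hT_open : IsOpen T := by
    rw [isOpen_iff_mem_nhds]
    intro z hz
    have hz' : z.arg ∈ Ioo 0 (α / 2) := hz
    have hzne : z ≠ 0 := by
      intro h; rw [h, Complex.arg_zero] at hz'; exact lt_irrefl 0 hz'.1
    have hre : 0 < z.re := by
      have : |z.arg| < π / 2 := by
        rw [abs_lt]; constructor <;> [linarith [hz'.1]; linarith [hz'.2]]
      rcases Complex.abs_arg_lt_pi_div_two_iff.1 this with h | h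
      · exact h
      · exact absurd h hzne
    have hcont : ContinuousAt Complex.arg z := Complex.continuousAt_arg (Or.inl hre)
    exact hcont.preimage_mem_nhds (isOpen_Ioo.mem_nhds hz')
  have hT_sub_S : T ⊆ S := by
    intro z hz
    have hz' : z.arg ∈ Ioo 0 (α / 2) := hz
    rw [hS]
    refine ⟨fun h => ?_, by linarith [hz'.1], by linarith [hz'.2]⟩
    rw [h, Complex.arg_zero] at hz'; exact lt_irrefl 0 hz'.1
  have hT_int : T ⊆ interior S := interior_maximal hT_sub_S hT_open
  haveI : Nonempty (EuclideanSpace ℝ (Fin N)) := ⟨0⟩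
  -- the key three-lines estimate
  have key : ∀ θ₀ θ₁, θ₀ ∈ Icc (0 : ℝ) α → θ₁ ∈ Icc (0 : ℝ) α → θ₀ < θ₁ →
      ∀ a b : ℝ, 0 ≤ a → 0 ≤ b → a + b = 1 →
      c (a * θ₀ + b * θ₁) ≤ c θ₀ ^ a * c θ₁ ^ b := by
    intro θ₀ θ₁ hθ₀ hθ₁ hlt a b ha hb hab
    set δ := θ₁ - θ₀ with hδ
    have hδpos : 0 < δ := by simp [hδ]; linarith
    have hmid : a * θ₀ + b * θ₁ ∈ Icc (0 : ℝ) α :=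
      (convex_Icc (0 : ℝ) α) hθ₀ hθ₁ ha hb hab
    rw [hc (a * θ₀ + b * θ₁)]
    apply ciSup_le
    intro x
    set g : ℂ → ℂ := fun w => Complex.exp (Complex.I * (↑θ₀ + ↑δ * w) / 2) with hg
    have hgw : ∀ w : ℂ, g w = Complex.exp
        (Complex.I * (↑(θ₀ + δ * w.re) + ↑(δ * w.im) * Complex.I) / 2) := by
      intro w
      simp only [hg]
      congr 2
      conv_lhs => rw [← Complex.re_add_im w]
      push_cast
      ring
    set f : ℂ → ℂ := fun w => u (g w) x with hf
    have hθ_of : ∀ t : ℝ, t ∈ Icc (0 : ℝ) 1 → θ₀ + δ * t ∈ Icc (0 : ℝ) α := by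
      intro t ht
      constructor
      · nlinarith [hθ₀.1, ht.1, hδpos]
      · nlinarith [hθ₁.2, ht.2, hδpos]
    have hg_in_S : ∀ w : ℂ, w ∈ Complex.HadamardThreeLines.verticalClosedStrip 0 1 →
        g w ∈ S := by
      intro w hw
      rw [hgw w]
      exact hmemS _ (hθ_of w.re hw) _
    have hg_diff : Differentiable ℂ g := by
      have h1 : Differentiable ℂ (fun w : ℂ => Complex.I * (↑θ₀ + ↑δ * w) / 2) := by
        fun_prop
      exact h1.cexp
    have hg_in_T : ∀ w : ℂ, w ∈ Complex.HadamardThreeLines.verticalStrip 0 1 →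
        g w ∈ T := by
      intro w hw
      have hw' : w.re ∈ Ioo (0 : ℝ) 1 := hw
      rw [hgw w, hdecomp]
      have hθw : θ₀ + δ * w.re ∈ Icc (0 : ℝ) α := hθ_of w.re ⟨hw'.1.le, hw'.2.le⟩
      show Complex.arg _ ∈ Ioo 0 (α / 2)
      rw [Complex.arg_real_mul _ (Real.exp_pos _), harg _ hθw.1 hθw.2]
      constructor
      · nlinarith [hθ₀.1, hw'.1, hδpos]
      · nlinarith [hθ₁.2, hw'.2, hδpos]
    have hdiff : DiffContOnCl ℂ f (Complex.HadamardThreeLines.verticalStrip 0 1) := by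
      constructor
      · exact (hu_an x).comp hg_diff.differentiableOn
          (fun w hw => hT_int (hg_in_T w hw))
      · have hclos : closure (Complex.HadamardThreeLines.verticalStrip 0 1)
            = Complex.HadamardThreeLines.verticalClosedStrip 0 1 := by
          rw [Complex.HadamardThreeLines.verticalStrip,
            Complex.HadamardThreeLines.verticalClosedStrip,
            Complex.closure_preimage_re, closure_Ioo zero_ne_one]
        rw [hclos]
        exact (hu_cont x).comp hg_diff.continuous.continuousOn hg_in_S
    have hB : BddAbove ((norm ∘ f) '' Complex.HadamardThreeLines.verticalClosedStrip 0 1) := by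
      refine ⟨M, ?_⟩
      rintro v ⟨w, hw, rfl⟩
      exact hM _ (hg_in_S w hw) x
    have ha0 : ∀ w ∈ Complex.re ⁻¹' {(0 : ℝ)}, ‖f w‖ ≤ c θ₀ := by
      intro w hw
      have hwre : w.re = 0 := hw
      show ‖u (g w) x‖ ≤ c θ₀
      rw [hgw w, hwre]
      simpa using hfle θ₀ hθ₀ (δ * w.im) x
    have ha1 : ∀ w ∈ Complex.re ⁻¹' {(1 : ℝ)}, ‖f w‖ ≤ c θ₁ := by
      intro w hw
      have hwre : w.re = 1 := hw
      show ‖u (g w) x‖ ≤ c θ₁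
      rw [hgw w, hwre]
      have : θ₀ + δ * 1 = θ₁ := by simp [hδ]
      rw [this]
      exact hfle θ₁ hθ₁ (δ * w.im) x
    have hzmem : (↑b : ℂ) ∈ Complex.HadamardThreeLines.verticalClosedStrip 0 1 := by
      show (↑b : ℂ).re ∈ Icc (0 : ℝ) 1
      rw [Complex.ofReal_re]
      exact ⟨hb, by linarith⟩
    have hkey := Complex.HadamardThreeLines.norm_le_interp_of_mem_verticalClosedStrip₀₁'
      f hzmem hdiff hB ha0 ha1
    rw [Complex.ofReal_re] at hkey
    have hfb : f (↑b : ℂ) = u (Complex.exp (Complex.I * ↑(a * θ₀ + b * θ₁) / 2)) x := by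
      simp only [hf, hg]
      congr 3
      have : a = 1 - b := by linarith
      rw [this]
      push_cast [hδ]
      ring
    rw [hfb] at hkey
    have h1b : 1 - b = a := by linarith
    rw [h1b] at hkey
    exact hkey
  -- conclude convexity
  have hlog : ∀ θ₀ θ₁, θ₀ ∈ Icc (0 : ℝ) α → θ₁ ∈ Icc (0 : ℝ) α → θ₀ < θ₁ →
      ∀ a b : ℝ, 0 ≤ a → 0 ≤ b → a + b = 1 →
      Real.log (c (a * θ₀ + b * θ₁)) ≤ a * Real.log (c θ₀) + b * Real.log (c θ₁) := by
    intro θ₀ θ₁ hθ₀ hθ₁ hlt a b ha hb hab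
    have hmid : a * θ₀ + b * θ₁ ∈ Icc (0 : ℝ) α :=
      (convex_Icc (0 : ℝ) α) hθ₀ hθ₁ ha hb hab
    have h1 := Real.log_le_log (hcpos _ hmid) (key θ₀ θ₁ hθ₀ hθ₁ hlt a b ha hb hab)
    rwa [Real.log_mul (Real.rpow_pos_of_pos (hcpos θ₀ hθ₀) a).ne'
        (Real.rpow_pos_of_pos (hcpos θ₁ hθ₁) b).ne',
      Real.log_rpow (hcpos θ₀ hθ₀), Real.log_rpow (hcpos θ₁ hθ₁)] at h1
  refine ⟨convex_Icc 0 α, fun x hx y hy a b ha hb hab => ?_⟩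
  simp only [smul_eq_mul]
  rcases lt_trichotomy x y with h | h | h
  · exact hlog x y hx hy h a b ha hb hab
  · subst h
    have hxx : a * x + b * x = x := by rw [← add_mul, hab, one_mul]
    rw [hxx, ← add_mul, hab, one_mul]
  · have h2 := hlog y x hy hx h b a hb ha (by linarith)
    have h3 : b * y + a * x = a * x + b * y := by ring
    rw [h3] at h2
    linarith
end
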